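/- For every x' ∈ ℝ² and t ∈ ℝ, the eigenvalues of the matrix ∂ₜA(x',t) are λ₁ = 0, λ₂ = |x'|²t − √(|x'|⁴t² + |x'|²), and λ₃ = |x'|²t + √(|x'|⁴t² + |x'|²). In particular, if x' ≠ 0 then ∂ₜA(x',t) has a strictly negative eigenvalue, so the monotonicity condition ∂ₜA(x',t) ≥ cI fails for every c > 0. -/
import Mathlib

open Matrix

/-- The entrywise `t`-derivative `∂ₜA(x',t)` of the twisted-waveguide metric. -/
def dAmat (x₁ x₂ t : ℝ) : Matrix (Fin 3) (Fin 3) ℝ :=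
  !![2 * x₂^2 * t, -(2 * x₁ * x₂ * t), -x₂;
     -(2 * x₁ * x₂ * t), 2 * x₁^2 * t, x₁;
     -x₂, x₁, 0]

lemma dAmat_evec (x₁ x₂ t lam : ℝ) (hl : lam^2 = 2*(x₁^2+x₂^2)*t*lam + (x₁^2+x₂^2)) :
    (dAmat x₁ x₂ t).mulVec ![-x₂*lam, x₁*lam, x₁^2+x₂^2]
      = lam • ![-x₂*lam, x₁*lam, x₁^2+x₂^2] := by
  funext i
  fin_cases i <;>
    simp [dAmat, Matrix.mulVec, dotProduct, Fin.sum_univ_three]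
  · linear_combination x₂ * hl
  · linear_combination (-x₁) * hl
  · ring

lemma dAmat_det (x₁ x₂ t μ : ℝ) : (dAmat x₁ x₂ t - μ • 1).det
    = -(μ^3) + 2*(x₁^2+x₂^2)*t*μ^2 + (x₁^2+x₂^2)*μ := by
  simp [dAmat, Matrix.det_fin_three, Matrix.sub_apply, Matrix.smul_apply,
    Matrix.one_apply]
  ring

lemma stmt3_aux (x₁ x₂ t S lam2 lam3 : ℝ)
    (hS : S^2 = (x₁^2+x₂^2)^2*t^2 + (x₁^2+x₂^2)) (hS0 : 0 ≤ S)
    (h2 : lam2 = (x₁^2+x₂^2)*t - S) (h3 : lam3 = (x₁^2+x₂^2)*t + S) :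
    (∀ μ ∈ ({0, lam2, lam3} : Set ℝ),
        ∃ v : Fin 3 → ℝ, v ≠ 0 ∧ (dAmat x₁ x₂ t).mulVec v = μ • v) ∧
    (∀ μ : ℝ, ∀ v : Fin 3 → ℝ, v ≠ 0 → (dAmat x₁ x₂ t).mulVec v = μ • v →
        μ ∈ ({0, lam2, lam3} : Set ℝ)) ∧
    ((x₁, x₂) ≠ (0, 0) →
      lam2 < 0 ∧
      ∀ c : ℝ, 0 < c →
        ¬ (∀ ζ : Fin 3 → ℝ, c * (ζ ⬝ᵥ ζ) ≤ ζ ⬝ᵥ (dAmat x₁ x₂ t).mulVec ζ)) := by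
  have hq2 : lam2^2 = 2*(x₁^2+x₂^2)*t*lam2 + (x₁^2+x₂^2) := by
    subst h2; linear_combination hS
  have hq3 : lam3^2 = 2*(x₁^2+x₂^2)*t*lam3 + (x₁^2+x₂^2) := by
    subst h3; linear_combination hS
  refine ⟨?_, ?_, ?_⟩
  · -- eigenvectors exist
    intro μ hμ
    by_cases h0 : x₁ = 0 ∧ x₂ = 0
    · obtain ⟨e1, e2⟩ := h0
      have hSz : S = 0 := by
        have : S^2 = 0 := by rw [hS, e1, e2]; ring
        nlinarith
      have hμ0 : μ = 0 := by
        subst e1 e2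
        rcases hμ with h | h | h <;> simp_all
      refine ⟨![1, 0, 0], ?_, ?_⟩
      · intro h; have := congrFun h 0; simp at this
      · subst e1 e2 hμ0
        funext i
        fin_cases i <;>
          simp [dAmat, Matrix.mulVec, dotProduct, Fin.sum_univ_three,
            Matrix.vecHead, Matrix.vecTail]
    · rcases hμ with h | h | h
      · -- μ = 0
        refine ⟨![x₁, x₂, 0], ?_, ?_⟩
        · intro hv
          exact h0 ⟨by simpa using congrFun hv 0, by simpa using congrFun hv 1⟩
        · subst h
          funext i
          fin_cases i <;>
            simp [dAmat, Matrix.mulVec, dotProduct, Fin.sum_univ_three] <;> ring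
      · rw [h]
        refine ⟨![-x₂*lam2, x₁*lam2, x₁^2+x₂^2], ?_, dAmat_evec x₁ x₂ t lam2 hq2⟩
        intro hv
        have h22 := congrFun hv 2
        simp at h22
        exact h0 ⟨by nlinarith [sq_nonneg x₁, sq_nonneg x₂],
          by nlinarith [sq_nonneg x₁, sq_nonneg x₂]⟩
      · rw [h]
        refine ⟨![-x₂*lam3, x₁*lam3, x₁^2+x₂^2], ?_, dAmat_evec x₁ x₂ t lam3 hq3⟩
        intro hv
        have h22 := congrFun hv 2
        simp at h22
        exact h0 ⟨by nlinarith [sq_nonneg x₁, sq_nonneg x₂],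
          by nlinarith [sq_nonneg x₁, sq_nonneg x₂]⟩
  · -- only eigenvalues
    intro μ v hv heig
    have hker : (dAmat x₁ x₂ t - μ • 1).mulVec v = 0 := by
      rw [Matrix.sub_mulVec, Matrix.smul_mulVec, Matrix.one_mulVec, heig, sub_self]
    have hdet : (dAmat x₁ x₂ t - μ • 1).det = 0 :=
      (Matrix.exists_mulVec_eq_zero_iff).mp ⟨v, hv, hker⟩
    rw [dAmat_det] at hdet
    have hfac : μ * ((μ - lam2) * (μ - lam3)) = 0 := by
      subst h2 h3
      linear_combination (-1) * hdet + (-μ) * hS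
    rcases mul_eq_zero.mp hfac with h | h
    · exact Or.inl h
    · rcases mul_eq_zero.mp h with h | h
      · exact Or.inr (Or.inl (sub_eq_zero.mp h))
      · exact Or.inr (Or.inr (sub_eq_zero.mp h))
  · -- negative eigenvalue
    intro hx
    have hn2 : 0 < x₁^2 + x₂^2 := by
      by_contra hc
      push_neg at hc
      have h1 : x₁ = 0 := by nlinarith [sq_nonneg x₁, sq_nonneg x₂]
      have h2' : x₂ = 0 := by nlinarith [sq_nonneg x₁, sq_nonneg x₂]
      exact hx (by simp [h1, h2'])
    have hlam2 : lam2 < 0 := by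
      subst h2
      nlinarith [hS, hS0, hn2]
    refine ⟨hlam2, ?_⟩
    intro c hc habs
    set ζ : Fin 3 → ℝ := ![-x₂*lam2, x₁*lam2, x₁^2+x₂^2] with hζ
    have heig := dAmat_evec x₁ x₂ t lam2 hq2
    have hdot : ζ ⬝ᵥ (dAmat x₁ x₂ t).mulVec ζ = lam2 * (ζ ⬝ᵥ ζ) := by
      rw [hζ, heig, dotProduct_smul]
      simp [smul_eq_mul]
    have hzz : 0 < ζ ⬝ᵥ ζ := by
      have : ζ ⬝ᵥ ζ = (x₂*lam2)^2 + (x₁*lam2)^2 + (x₁^2+x₂^2)^2 := by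
        simp [hζ, dotProduct, Fin.sum_univ_three]; ring
      nlinarith [sq_nonneg (x₂*lam2), sq_nonneg (x₁*lam2), hn2]
    have := habs ζ
    rw [hdot] at this
    nlinarith


/-- The eigenvalues of `∂ₜA(x',t)` are `0`, `|x'|²t ± √(|x'|⁴t² + |x'|²)`; in particular
for `x' ≠ 0` there is a strictly negative eigenvalue and the monotonicity condition
`∂ₜA(x',t) ≥ cI` fails for every `c > 0`. -/
theorem stmt3 (x₁ x₂ t : ℝ) :
    let n2 : ℝ := x₁^2 + x₂^2
    let lam2 : ℝ := n2 * t - Real.sqrt (n2^2 * t^2 + n2)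
    let lam3 : ℝ := n2 * t + Real.sqrt (n2^2 * t^2 + n2)
    (∀ μ ∈ ({0, lam2, lam3} : Set ℝ),
        ∃ v : Fin 3 → ℝ, v ≠ 0 ∧ (dAmat x₁ x₂ t).mulVec v = μ • v) ∧
    (∀ μ : ℝ, ∀ v : Fin 3 → ℝ, v ≠ 0 → (dAmat x₁ x₂ t).mulVec v = μ • v →
        μ ∈ ({0, lam2, lam3} : Set ℝ)) ∧
    ((x₁, x₂) ≠ (0, 0) →
      lam2 < 0 ∧
      ∀ c : ℝ, 0 < c →
        ¬ (∀ ζ : Fin 3 → ℝ, c * (ζ ⬝ᵥ ζ) ≤ ζ ⬝ᵥ (dAmat x₁ x₂ t).mulVec ζ)) := by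
  intro n2 lam2 lam3
  exact stmt3_aux x₁ x₂ t (Real.sqrt (n2^2 * t^2 + n2)) lam2 lam3
    (Real.sq_sqrt (by positivity)) (Real.sqrt_nonneg _) rfl rfl
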